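/- Let Ω ⊂ ℂⁿ be a bounded domain and u, v : cl(Ω) → ℝ continuous, smooth on Ω, such that P(u) ≥ 0 and P(v) ≥ 0, where P(w) = (1/(n−1))((Δw)β − i∂∂̄w) with β the Euclidean Kähler form. If P(v)ⁿ ≥ P(u)ⁿ on Ω and v ≤ u on ∂Ω, then v ≤ u on Ω. -/

import Mathlib

open scoped BigOperators ComplexOrder

/-- Second derivative of `u` at `z` in the (real) directions `v`, `w`. -/
noncomputable def d2 (n : ℕ) (u : (Fin n → ℂ) → ℝ) (z v w : Fin n → ℂ) : ℝ :=
  fderiv ℝ (fun y => fderiv ℝ u y w) z v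

/-- The complex Hessian `∂²u/∂zⁱ∂z̄ʲ`, expressed via real second derivatives:
`∂²u/∂zⁱ∂z̄ʲ = ¼(∂ₓᵢ∂ₓⱼu + ∂ᵧᵢ∂ᵧⱼu) + (i/4)(∂ₓᵢ∂ᵧⱼu − ∂ᵧᵢ∂ₓⱼu)`. -/
noncomputable def cHess (n : ℕ) (u : (Fin n → ℂ) → ℝ) (z : Fin n → ℂ) (i j : Fin n) : ℂ :=
  (1 / 4 : ℂ) *
    (((d2 n u z (Pi.single i 1) (Pi.single j 1)
        + d2 n u z (Pi.single i Complex.I) (Pi.single j Complex.I) : ℝ) : ℂ)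
      + Complex.I * ((d2 n u z (Pi.single i 1) (Pi.single j Complex.I)
        - d2 n u z (Pi.single i Complex.I) (Pi.single j 1) : ℝ) : ℂ))

/-- The matrix of the `(1,1)` form `P(u) = (1/(n−1))((Δu)β − i∂∂̄u)`, i.e.
`(1/(n−1))((∑ₖ u_{kk̄})δᵢⱼ − u_{ij̄})`. -/
noncomputable def Pmat (n : ℕ) (u : (Fin n → ℂ) → ℝ) (z : Fin n → ℂ) :
    Matrix (Fin n) (Fin n) ℂ :=
  ((n : ℂ) - 1)⁻¹ •
    ((∑ k, cHess n u z k k) • (1 : Matrix (Fin n) (Fin n) ℂ) - Matrix.of (cHess n u z))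

section MatrixAux
open Matrix

variable {m : ℕ}

lemma psd_smul_real {c : ℝ} (hc : 0 ≤ c) {A : Matrix (Fin m) (Fin m) ℂ} (hA : A.PosSemidef) :
    ((c : ℂ) • A).PosSemidef := by
  refine Matrix.PosSemidef.of_dotProduct_mulVec_nonneg ?_ (fun x => ?_)
  · unfold Matrix.IsHermitian
    rw [conjTranspose_smul, hA.1]
    congr 1
    simp [Complex.star_def, Complex.conj_ofReal]
  · rw [smul_mulVec, dotProduct_smul, smul_eq_mul]
    exact mul_nonneg (by exact_mod_cast hc) (hA.dotProduct_mulVec_nonneg x)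

lemma psd_trace_smul_one_sub {A : Matrix (Fin m) (Fin m) ℂ} (hA : A.PosSemidef) :
    ((∑ k, A k k) • (1 : Matrix (Fin m) (Fin m) ℂ) - A).PosSemidef := by
  classical
  set t : ℂ := ∑ k, A k k with ht
  have hH := hA.isHermitian
  set U : Matrix (Fin m) (Fin m) ℂ := (hH.eigenvectorUnitary : Matrix (Fin m) (Fin m) ℂ) with hU
  have hUU : U * star U = 1 := Matrix.mem_unitaryGroup_iff.mp hH.eigenvectorUnitary.2
  have hUU' : star U * U = 1 := Matrix.mem_unitaryGroup_iff'.mp hH.eigenvectorUnitary.2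
  have hsp := hH.spectral_theorem
  rw [Unitary.conjStarAlgAut_apply] at hsp
  have htr : t = ∑ k, (hH.eigenvalues k : ℂ) := by
    have h1 : t = (U * diagonal (RCLike.ofReal ∘ hH.eigenvalues) * star U).trace := by
      rw [← hsp]; simp [ht, Matrix.trace, Matrix.diag]
    rw [h1, Matrix.trace_mul_cycle, hUU', Matrix.one_mul, Matrix.trace_diagonal]
    rfl
  have key : t • (1 : Matrix (Fin m) (Fin m) ℂ) - A
      = U * diagonal (fun i => t - (hH.eigenvalues i : ℂ)) * Uᴴ := by
    have hd : diagonal (fun i => t - (hH.eigenvalues i : ℂ))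
        = diagonal (fun _ => t) - diagonal (RCLike.ofReal ∘ hH.eigenvalues) := by
      rw [← Matrix.diagonal_sub]; rfl
    rw [hd, Matrix.mul_sub, Matrix.sub_mul, ← Matrix.star_eq_conjTranspose, ← hsp,
      ← Matrix.smul_one_eq_diagonal, Matrix.mul_smul, Matrix.mul_one, Matrix.smul_mul, hUU]
  rw [key]
  refine Matrix.PosSemidef.mul_mul_conjTranspose_same ?_ U
  refine Matrix.PosSemidef.diagonal ?_
  intro i
  have h2 : (fun i => t - (hH.eigenvalues i : ℂ)) i
      = (((∑ k, hH.eigenvalues k) - hH.eigenvalues i : ℝ) : ℂ) := by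
    simp only [htr]; push_cast; ring
  rw [Pi.zero_apply, h2, Complex.zero_le_real]
  have := Finset.single_le_sum (f := hH.eigenvalues)
    (fun j _ => hA.eigenvalues_nonneg j) (Finset.mem_univ i)
  linarith

lemma posdef_conj {C P : Matrix (Fin m) (Fin m) ℂ} (hC : C.PosDef) (hP : IsUnit P.det) :
    (Pᴴ * C * P).PosDef := by
  refine Matrix.PosDef.of_dotProduct_mulVec_pos (Matrix.isHermitian_conjTranspose_mul_mul P hC.isHermitian) fun x hx => ?_
  have hPx : P *ᵥ x ≠ 0 := by
    intro h
    have := congrArg (fun y => P⁻¹ *ᵥ y) h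
    simpa [Matrix.mulVec_mulVec, Matrix.nonsing_inv_mul P hP, hx] using this
  simpa only [Matrix.star_mulVec, Matrix.dotProduct_mulVec, Matrix.vecMul_vecMul]
    using hC.dotProduct_mulVec_pos hPx

open scoped MatrixOrder in
lemma det_re_lt_det_re {A C : Matrix (Fin m) (Fin m) ℂ} (hm : 0 < m)
    (hA : A.PosSemidef) (hC : C.PosDef) : A.det.re < (A + C).det.re := by
  classical
  have hB : (A + C).PosDef := Matrix.PosDef.posSemidef_add hA hC
  set B := A + C with hBdef
  have hBpsd := hB.posSemidef
  set S := CFC.sqrt B with hSdef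
  have hSpsd : S.PosSemidef := (CFC.sqrt_nonneg B).posSemidef
  have hSH : S.IsHermitian := hSpsd.isHermitian
  have hSS : S * S = B := CFC.sqrt_mul_sqrt_self B hBpsd.nonneg
  have hdetS : S.det * S.det = B.det := by rw [← Matrix.det_mul, hSS]
  have hdetB : (0 : ℂ) < B.det := hB.det_pos
  have hdS : IsUnit S.det := by
    rw [isUnit_iff_ne_zero]
    intro h
    rw [h, mul_zero] at hdetS
    exact hdetB.ne' hdetS.symm
  have hSi : S * S⁻¹ = 1 := Matrix.mul_nonsing_inv S hdS
  have hiS : S⁻¹ * S = 1 := Matrix.nonsing_inv_mul S hdS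
  have hiH : (S⁻¹)ᴴ = S⁻¹ := hSH.inv
  set M := S⁻¹ * A * S⁻¹ with hMdef
  have hMpsd : M.PosSemidef := by
    have h := hA.mul_mul_conjTranspose_same S⁻¹
    rwa [hiH] at h
  have hSMS : S * M * S = A := by
    calc S * (S⁻¹ * A * S⁻¹) * S = S * S⁻¹ * A * (S⁻¹ * S) := by
          simp only [Matrix.mul_assoc]
      _ = A := by rw [hSi, hiS, Matrix.one_mul, Matrix.mul_one]
  have hdetA : A.det = B.det * M.det := by
    rw [← hSMS, Matrix.det_mul, Matrix.det_mul, ← hdetS]; ring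
  have h1M : ((1 : Matrix (Fin m) (Fin m) ℂ) - M).PosDef := by
    have h3 : S⁻¹ * B * S⁻¹ = 1 := by
      rw [← hSS]
      calc S⁻¹ * (S * S) * S⁻¹ = (S⁻¹ * S) * (S * S⁻¹) := by simp only [Matrix.mul_assoc]
        _ = 1 := by rw [hiS, hSi, Matrix.one_mul]
    have hEq : (1 : Matrix (Fin m) (Fin m) ℂ) - M = (S⁻¹)ᴴ * C * S⁻¹ := by
      rw [hiH, ← h3, hMdef, hBdef]
      simp only [Matrix.mul_add, Matrix.add_mul]
      abel
    rw [hEq]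
    refine posdef_conj hC ?_
    rw [Matrix.det_nonsing_inv]
    exact isUnit_ringInverse.mpr hdS
  -- eigenvalues of M lie in [0, 1)
  have hμ0 : ∀ i, 0 ≤ hMpsd.isHermitian.eigenvalues i := hMpsd.eigenvalues_nonneg
  have hμ1 : ∀ i, hMpsd.isHermitian.eigenvalues i < 1 := by
    intro i
    set b := hMpsd.isHermitian.eigenvectorBasis i with hbdef
    have hb1 : ‖b‖ = 1 := hMpsd.isHermitian.eigenvectorBasis.orthonormal.1 i
    have hbne : b ≠ 0 := by
      intro h; rw [h, norm_zero] at hb1; exact zero_ne_one hb1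
    have hwne : (⇑b : Fin m → ℂ) ≠ 0 := by
      intro h
      apply hbne
      ext j
      exact congrFun h j
    have hdot : dotProduct (star (⇑b : Fin m → ℂ)) (⇑b : Fin m → ℂ) = 1 := by
      have h := inner_self_eq_norm_sq_to_K (𝕜 := ℂ) b
      rw [hb1, EuclideanSpace.inner_eq_star_dotProduct, dotProduct_comm] at h
      simpa using h
    have hpos := h1M.re_dotProduct_pos hwne
    rw [Matrix.sub_mulVec, Matrix.one_mulVec, dotProduct_sub, hdot] at hpos
    have hev := hMpsd.isHermitian.eigenvalues_eq i
    simp only [map_sub] at hpos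
    rw [← hev] at hpos
    simpa using sub_pos.mp (by simpa using hpos)
  have hdetM : M.det = ((∏ i, hMpsd.isHermitian.eigenvalues i : ℝ) : ℂ) := by
    rw [hMpsd.isHermitian.det_eq_prod_eigenvalues]
    push_cast
    rfl
  have hprod1 : (∏ i, hMpsd.isHermitian.eigenvalues i) < 1 := by
    by_cases h : ∃ i, hMpsd.isHermitian.eigenvalues i = 0
    · obtain ⟨i, hi⟩ := h
      rw [Finset.prod_eq_zero (Finset.mem_univ i) hi]
      norm_num
    · push_neg at h
      have : Nonempty (Fin m) := ⟨⟨0, hm⟩⟩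
      calc (∏ i, hMpsd.isHermitian.eigenvalues i) < ∏ _i : Fin m, 1 := by
            refine Finset.prod_lt_prod_of_nonempty ?_ ?_ Finset.univ_nonempty
            · exact fun i _ => lt_of_le_of_ne (hμ0 i) (Ne.symm (h i))
            · exact fun i _ => hμ1 i
        _ = 1 := by simp
  have hBre : 0 < B.det.re ∧ B.det.im = 0 := by
    rw [Complex.lt_def] at hdetB
    simpa using ⟨hdetB.1, hdetB.2.symm⟩
  have hre : A.det.re = B.det.re * (∏ i, hMpsd.isHermitian.eigenvalues i) := by
    rw [hdetA, hdetM, Complex.mul_re, Complex.ofReal_re, Complex.ofReal_im, mul_zero, sub_zero]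
  rw [hre]
  nlinarith [hBre.1, hprod1]

section Q


variable {N : ℕ}

/-- the auxiliary strictly plurisubharmonic weight `|z|²` -/
def qfun (N : ℕ) (z : Fin N → ℂ) : ℝ := ∑ k, Complex.normSq (z k)

noncomputable def Lre (k : Fin N) : (Fin N → ℂ) →L[ℝ] ℝ :=
  Complex.reCLM.comp (ContinuousLinearMap.proj k)

noncomputable def Lim (k : Fin N) : (Fin N → ℂ) →L[ℝ] ℝ :=
  Complex.imCLM.comp (ContinuousLinearMap.proj k)

noncomputable def Mq (w : Fin N → ℂ) : (Fin N → ℂ) →L[ℝ] ℝ :=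
  ∑ k, ((2 * (w k).re) • Lre k + (2 * (w k).im) • Lim k)

lemma Mq_apply (w y : Fin N → ℂ) :
    Mq w y = ∑ k, (2 * (w k).re * (y k).re + 2 * (w k).im * (y k).im) := by
  simp [Mq, Lre, Lim, ContinuousLinearMap.sum_apply, mul_comm]

lemma qfun_hasFDerivAt (y : Fin N → ℂ) : HasFDerivAt (qfun N) (Mq y) y := by
  have h : ∀ k : Fin N, HasFDerivAt (fun z : Fin N → ℂ => Complex.normSq (z k))
      ((2 * (y k).re) • Lre k + (2 * (y k).im) • Lim k) y := by
    intro k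
    have h1 : HasFDerivAt (fun z : Fin N → ℂ => (z k).re) (Lre k) y := (Lre k).hasFDerivAt
    have h2 : HasFDerivAt (fun z : Fin N → ℂ => (z k).im) (Lim k) y := (Lim k).hasFDerivAt
    have h3 : HasFDerivAt (fun z : Fin N → ℂ => (z k).re * (z k).re + (z k).im * (z k).im) _ y :=
      (h1.mul h1).add (h2.mul h2)
    have h4 : (fun z : Fin N → ℂ => Complex.normSq (z k))
        = fun z => (z k).re * (z k).re + (z k).im * (z k).im := by
      funext z; rw [Complex.normSq_apply]
    rw [h4]
    refine h3.congr_fderiv ?_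
    ext z
    simp only [ContinuousLinearMap.add_apply, ContinuousLinearMap.coe_smul',
      Pi.smul_apply, smul_eq_mul]
    ring
  exact HasFDerivAt.fun_sum (fun k _ => h k)

lemma qfun_fderiv_apply (y w : Fin N → ℂ) :
    fderiv ℝ (qfun N) y w = Mq w y := by
  rw [(qfun_hasFDerivAt y).fderiv, Mq_apply, Mq_apply]
  apply Finset.sum_congr rfl
  intro k _
  ring

lemma qfun_d2 (p v w : Fin N → ℂ) :
    d2 N (qfun N) p v w = Mq w v := by
  show fderiv ℝ (fun y => fderiv ℝ (qfun N) y w) p v = _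
  have h1 : (fun y => fderiv ℝ (qfun N) y w) = ⇑(Mq w) := by
    funext y; exact qfun_fderiv_apply y w
  rw [h1, (Mq w).fderiv]

lemma qfun_contDiff : ContDiff ℝ (⊤ : ℕ∞) (qfun N) := by
  apply ContDiff.sum
  intro k _
  have h1 : ContDiff ℝ (⊤ : ℕ∞) (fun z : Fin N → ℂ => (z k).re) := (Lre k).contDiff
  have h2 : ContDiff ℝ (⊤ : ℕ∞) (fun z : Fin N → ℂ => (z k).im) := (Lim k).contDiff
  have h4 : (fun z : Fin N → ℂ => Complex.normSq (z k))
      = fun z => (z k).re * (z k).re + (z k).im * (z k).im := by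
    funext z; rw [Complex.normSq_apply]
  rw [h4]
  exact (h1.mul h1).add (h2.mul h2)

end Q

section Analysis


variable {N : ℕ}

lemma d2_eq_fderiv2 {f : (Fin N → ℂ) → ℝ} {p : Fin N → ℂ}
    (hf : ContDiffAt ℝ 2 f p) (v w : Fin N → ℂ) :
    d2 N f p v w = fderiv ℝ (fderiv ℝ f) p v w := by
  have h2 : DifferentiableAt ℝ (fderiv ℝ f) p :=
    (hf.fderiv_right (m := 1) (by norm_num)).differentiableAt (by norm_num)
  have h3 : HasFDerivAt (fun y => fderiv ℝ f y w)
      ((ContinuousLinearMap.apply ℝ ℝ w).comp (fderiv ℝ (fderiv ℝ f) p)) p :=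
    (ContinuousLinearMap.apply ℝ ℝ w).hasFDerivAt.comp p h2.hasFDerivAt
  show fderiv ℝ (fun y => fderiv ℝ f y w) p v = _
  rw [h3.fderiv]
  rfl

lemma d2_symm {f : (Fin N → ℂ) → ℝ} {p : Fin N → ℂ}
    (hf : ContDiffAt ℝ 2 f p) (v w : Fin N → ℂ) :
    d2 N f p v w = d2 N f p w v := by
  rw [d2_eq_fderiv2 hf, d2_eq_fderiv2 hf]
  exact (hf.isSymmSndFDerivAt (by simp)).eq v w

lemma d2_neg (f : (Fin N → ℂ) → ℝ) (p v w : Fin N → ℂ) :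
    d2 N (fun z => -(f z)) p v w = - d2 N f p v w := by
  show fderiv ℝ (fun y => fderiv ℝ (fun z => -(f z)) y w) p v = _
  have h1 : (fun y => fderiv ℝ (fun z => -(f z)) y w) = fun y => -(fderiv ℝ f y w) := by
    funext y
    rw [fderiv_fun_neg]
    simp
  rw [h1]
  have h2 : (fun y => -(fderiv ℝ f y w)) = fun y => -((fun y' => fderiv ℝ f y' w) y) := rfl
  rw [h2, fderiv_fun_neg]
  simp
  rfl

lemma d2_nonpos_of_localMax {f : (Fin N → ℂ) → ℝ} {p : Fin N → ℂ}
    (hf : ∀ᶠ y in nhds p, ContDiffAt ℝ 2 f y) (hmax : IsLocalMax f p) (w : Fin N → ℂ) :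
    d2 N f p w w ≤ 0 := by
  by_contra hcon
  push_neg at hcon
  obtain ⟨U, hUnhds, hU⟩ := hf.exists_mem
  obtain ⟨W, hWnhds, hW⟩ := hmax.exists_mem
  have hpU : p ∈ U := mem_of_mem_nhds hUnhds
  set L : ℝ → (Fin N → ℂ) := fun s => p + s • w with hLdef
  have hline : ∀ t : ℝ, HasDerivAt L w t := by
    intro t
    simpa [hLdef] using ((hasDerivAt_id t).smul_const w).const_add p
  have hL0 : L 0 = p := by simp [hLdef]
  have hLcont : Continuous L := by
    apply continuous_const.add
    exact continuous_id.smul continuous_const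
  set g : ℝ → ℝ := fun t => f (L t) with hgdef
  set G : ℝ → ℝ := fun t => fderiv ℝ f (L t) w with hGdef
  have hgderiv : ∀ t : ℝ, L t ∈ U → HasDerivAt g (G t) t := fun t ht =>
    ((hU _ ht).differentiableAt (by norm_num)).hasFDerivAt.comp_hasDerivAt t (hline t)
  -- derivative of G at 0
  have hGd : HasDerivAt G (d2 N f p w w) 0 := by
    have h2 : DifferentiableAt ℝ (fderiv ℝ f) p :=
      ((hU p hpU).fderiv_right (m := 1) (by norm_num)).differentiableAt (by norm_num)
    have h3 : HasFDerivAt (fun y => fderiv ℝ f y w)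
        ((ContinuousLinearMap.apply ℝ ℝ w).comp (fderiv ℝ (fderiv ℝ f) p)) p :=
      (ContinuousLinearMap.apply ℝ ℝ w).hasFDerivAt.comp p h2.hasFDerivAt
    rw [← hL0] at h3
    have h4 := h3.comp_hasDerivAt 0 (hline 0)
    have h5 : d2 N f p w w = fderiv ℝ (fderiv ℝ f) p w w :=
      d2_eq_fderiv2 (hU p hpU) w w
    rw [h5, ← hL0]
    exact h4
  have hG0 : G 0 = 0 := by
    have := hmax.fderiv_eq_zero
    simp [hGdef, hL0, this]
  -- G is eventually positive to the right of 0
  have hslope : Filter.Tendsto (slope G 0) (nhdsWithin 0 {(0:ℝ)}ᶜ) (nhds (d2 N f p w w)) :=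
    hasDerivAt_iff_tendsto_slope.mp hGd
  have hev : ∀ᶠ t in nhdsWithin 0 {(0:ℝ)}ᶜ, 0 < slope G 0 t :=
    hslope.eventually (eventually_gt_nhds hcon)
  have hev2 : ∀ᶠ t in nhdsWithin (0:ℝ) (Set.Ioi 0), 0 < G t := by
    have hmono : nhdsWithin (0:ℝ) (Set.Ioi 0) ≤ nhdsWithin 0 {(0:ℝ)}ᶜ :=
      nhdsWithin_mono 0 (fun t ht => ne_of_gt ht)
    filter_upwards [hmono hev, self_mem_nhdsWithin] with t ht ht0
    have : slope G 0 t = G t / t := by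
      simp [slope_def_field, hG0]
    rw [this] at ht
    have ht0' : (0:ℝ) < t := ht0
    have h6 := mul_pos ht ht0'
    rwa [div_mul_cancel₀ _ (ne_of_gt ht0')] at h6
  rw [eventually_nhdsWithin_iff] at hev2
  obtain ⟨V3, hV3nhds, hV3⟩ := hev2.exists_mem
  have hV1 : L ⁻¹' U ∈ nhds (0:ℝ) :=
    hLcont.continuousAt.preimage_mem_nhds (by rwa [hL0])
  have hV2 : L ⁻¹' W ∈ nhds (0:ℝ) :=
    hLcont.continuousAt.preimage_mem_nhds (by rwa [hL0])
  obtain ⟨r, hr, hball⟩ := Metric.mem_nhds_iff.mp (Filter.inter_mem (Filter.inter_mem hV1 hV2) hV3nhds)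
  set b := r / 2 with hbdef
  have hb : 0 < b := by positivity
  have hIcc : Set.Icc (0:ℝ) b ⊆ Metric.ball 0 r := by
    intro t ht
    rw [Metric.mem_ball, Real.dist_eq, sub_zero, abs_of_nonneg ht.1]
    linarith [ht.2]
  have hmem : ∀ t ∈ Set.Icc (0:ℝ) b, L t ∈ U ∧ L t ∈ W ∧ t ∈ V3 := by
    intro t ht
    have := hball (hIcc ht)
    exact ⟨this.1.1, this.1.2, this.2⟩
  have hsm : StrictMonoOn g (Set.Icc 0 b) := by
    apply strictMonoOn_of_deriv_pos (convex_Icc 0 b)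
    · intro t ht
      exact (hgderiv t (hmem t ht).1).continuousAt.continuousWithinAt
    · intro t ht
      rw [interior_Icc] at ht
      have htIcc : t ∈ Set.Icc (0:ℝ) b := ⟨le_of_lt ht.1, le_of_lt ht.2⟩
      rw [(hgderiv t (hmem t htIcc).1).deriv]
      exact hV3 t (hmem t htIcc).2.2 ht.1
  have h01 : g 0 < g b :=
    hsm (Set.left_mem_Icc.mpr (le_of_lt hb)) (Set.right_mem_Icc.mpr (le_of_lt hb)) hb
  have h02 : g b ≤ g 0 := by
    have := hW _ (hmem b (Set.right_mem_Icc.mpr (le_of_lt hb))).2.1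
    simpa [hgdef, hL0] using this
  linarith

end Analysis

section PSD
open Matrix

variable {N : ℕ}

lemma cHess_hermitian_entry {g : (Fin N → ℂ) → ℝ} {p : Fin N → ℂ}
    (hg : ContDiffAt ℝ 2 g p) (i j : Fin N) :
    star (cHess N g p j i) = cHess N g p i j := by
  have hd2 : ∀ v w, d2 N g p v w = fderiv ℝ (fderiv ℝ g) p v w := fun v w => d2_eq_fderiv2 hg v w
  have hsym : ∀ v w, fderiv ℝ (fderiv ℝ g) p v w = fderiv ℝ (fderiv ℝ g) p w v :=
    (hg.isSymmSndFDerivAt (by simp)).eq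
  simp only [cHess, hd2]
  rw [hsym (Pi.single j 1) (Pi.single i 1), hsym (Pi.single j Complex.I) (Pi.single i Complex.I),
    hsym (Pi.single j 1) (Pi.single i Complex.I), hsym (Pi.single j Complex.I) (Pi.single i 1)]
  simp only [star_mul', star_add, Complex.star_def, _root_.map_mul, _root_.map_add, map_sub,
    _root_.map_one, map_div₀, map_ofNat, Complex.conj_ofReal, Complex.conj_I]
  push_cast
  ring

lemma cHess_posSemidef {g : (Fin N → ℂ) → ℝ} {p : Fin N → ℂ}
    (hg : ContDiffAt ℝ 2 g p) (hpos : ∀ w, 0 ≤ d2 N g p w w) :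
    (Matrix.of (cHess N g p)).PosSemidef := by
  classical
  set D := fderiv ℝ (fderiv ℝ g) p with hD
  have hd2 : ∀ v w, d2 N g p v w = D v w := fun v w => d2_eq_fderiv2 hg v w
  have hherm : (Matrix.of (cHess N g p)).IsHermitian := by
    show (Matrix.of (cHess N g p))ᴴ = _
    ext i j
    simp only [Matrix.conjTranspose_apply, Matrix.of_apply]
    exact cHess_hermitian_entry hg i j
  refine Matrix.PosSemidef.of_dotProduct_mulVec_nonneg hherm fun x => ?_
  set z := dotProduct (star x) (Matrix.mulVec (Matrix.of (cHess N g p)) x) with hz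
  have hresum : z = ∑ i, ∑ j, star (x i) * (cHess N g p i j * x j) := by
    rw [hz]
    simp only [dotProduct, Matrix.mulVec, Matrix.of_apply, Pi.star_apply,
      Finset.mul_sum]
  -- z is real since the matrix is hermitian
  have him : z.im = 0 := by
    have ht : ∀ i j : Fin N, (star (x i) * (cHess N g p i j * x j)).im
        + (star (x j) * (cHess N g p j i * x i)).im = 0 := by
      intro i j
      have hji : cHess N g p j i = star (cHess N g p i j) := by
        rw [← cHess_hermitian_entry hg i j, star_star]
      rw [hji]
      simp only [Complex.star_def, Complex.mul_im, Complex.mul_re, Complex.conj_re,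
        Complex.conj_im]
      ring
    have him1 : z.im = ∑ i, ∑ j, (star (x i) * (cHess N g p i j * x j)).im := by
      rw [hresum, Complex.im_sum]
      exact Finset.sum_congr rfl fun i _ => Complex.im_sum _ _
    have him2 : z.im = ∑ i, ∑ j, (star (x j) * (cHess N g p j i * x i)).im := by
      rw [him1]; exact Finset.sum_comm
    have h5 : (∑ i, ∑ j, (star (x i) * (cHess N g p i j * x j)).im)
        + (∑ i, ∑ j, (star (x j) * (cHess N g p j i * x i)).im) = 0 := by
      rw [← Finset.sum_add_distrib]
      refine Finset.sum_eq_zero fun i _ => ?_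
      rw [← Finset.sum_add_distrib]
      exact Finset.sum_eq_zero fun j _ => ht i j
    linarith [him1, him2, h5]
  -- decomposition vectors
  set cvec : Fin N → (Fin N → ℂ) := fun i =>
    (x i).re • (Pi.single i (1:ℂ) : Fin N → ℂ) + (-(x i).im) • (Pi.single i Complex.I : Fin N → ℂ) with hcvec
  set icvec : Fin N → (Fin N → ℂ) := fun i =>
    (x i).im • (Pi.single i (1:ℂ) : Fin N → ℂ) + (x i).re • (Pi.single i Complex.I : Fin N → ℂ) with hicvec
  have hpair : ∀ i j, (star (x i) * (cHess N g p i j * x j)).re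
      = (1/4) * (D (cvec i) (cvec j) + D (icvec i) (icvec j)) := by
    intro i j
    simp only [cHess, hd2, hcvec, hicvec, _root_.map_add, _root_.map_smul,
      ContinuousLinearMap.add_apply, ContinuousLinearMap.coe_smul', Pi.smul_apply, smul_eq_mul]
    simp only [Complex.star_def, Complex.mul_re, Complex.mul_im, Complex.add_re, Complex.add_im,
      Complex.ofReal_re, Complex.ofReal_im, Complex.I_re, Complex.I_im, Complex.conj_re,
      Complex.conj_im, Complex.div_re, Complex.div_im, Complex.one_re, Complex.one_im,
      Complex.normSq_apply, Complex.re_ofNat, Complex.im_ofNat, Complex.sub_re, Complex.sub_im]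
    ring
  have hre : z.re = ∑ i, ∑ j, (star (x i) * (cHess N g p i j * x j)).re := by
    rw [hresum, Complex.re_sum]
    exact Finset.sum_congr rfl fun i _ => Complex.re_sum _ _
  set vA : Fin N → ℂ := fun k => star (x k) with hvA
  set vB : Fin N → ℂ := fun k => Complex.I * star (x k) with hvB
  have hvAsum : vA = ∑ i, cvec i := by
    funext k
    rw [Finset.sum_apply]
    have hterm : ∀ i, cvec i k = (Pi.single i (((x i).re : ℂ) - (x i).im * Complex.I) : Fin N → ℂ) k := by
      intro i
      simp only [hcvec, Pi.add_apply, Pi.smul_apply, Pi.single_apply]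
      by_cases h : k = i <;> simp [h, Complex.real_smul] <;> ring
    simp only [hterm]
    rw [Fintype.sum_pi_single]
    rw [hvA]
    apply Complex.ext <;> simp
  have hvBsum : vB = ∑ i, icvec i := by
    funext k
    rw [Finset.sum_apply]
    have hterm : ∀ i, icvec i k = (Pi.single i (((x i).im : ℂ) + (x i).re * Complex.I) : Fin N → ℂ) k := by
      intro i
      simp only [hicvec, Pi.add_apply, Pi.smul_apply, Pi.single_apply]
      by_cases h : k = i <;> simp [h, Complex.real_smul] <;> ring
    simp only [hterm]
    rw [Fintype.sum_pi_single]
    rw [hvB]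
    apply Complex.ext <;> simp [Complex.mul_re, Complex.mul_im] <;> ring
  have hSA : D vA vA = ∑ i, ∑ j, D (cvec i) (cvec j) := by
    rw [hvAsum]
    simp only [map_sum, ContinuousLinearMap.sum_apply, ContinuousLinearMap.coe_sum',
      Finset.sum_apply]
    exact Finset.sum_comm
  have hSB : D vB vB = ∑ i, ∑ j, D (icvec i) (icvec j) := by
    rw [hvBsum]
    simp only [map_sum, ContinuousLinearMap.sum_apply, ContinuousLinearMap.coe_sum',
      Finset.sum_apply]
    exact Finset.sum_comm
  have hzre : z.re = (1/4) * (D vA vA + D vB vB) := by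
    rw [hre, hSA, hSB]
    rw [← Finset.sum_add_distrib, Finset.mul_sum]
    apply Finset.sum_congr rfl
    intro i _
    rw [← Finset.sum_add_distrib, Finset.mul_sum]
    apply Finset.sum_congr rfl
    intro j _
    exact hpair i j
  have hzre0 : 0 ≤ z.re := by
    rw [hzre]
    have h1 : 0 ≤ D vA vA := by rw [← hd2]; exact hpos vA
    have h2 : 0 ≤ D vB vB := by rw [← hd2]; exact hpos vB
    positivity
  rw [Complex.le_def]
  exact ⟨by simpa using hzre0, by simp [him]⟩

end PSD

section Combo
open Matrix

variable {N : ℕ}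

lemma Mq_single (i j : Fin N) (c c' : ℂ) :
    Mq (Pi.single j c') (Pi.single i c)
      = if i = j then 2 * (c.re * c'.re + c.im * c'.im) else 0 := by
  rw [Mq_apply]
  by_cases h : i = j
  · subst h
    rw [if_pos rfl, Finset.sum_eq_single i]
    · simp only [Pi.single_eq_same]
      ring
    · intro k _ hk
      simp [Pi.single_eq_of_ne hk]
    · simp
  · rw [if_neg h]
    apply Finset.sum_eq_zero
    intro k _
    by_cases hki : k = i
    · subst hki
      have hkj : k ≠ j := h
      simp [Pi.single_eq_of_ne hkj]
    · simp [Pi.single_eq_of_ne hki]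

lemma d2_combo {u v : (Fin N → ℂ) → ℝ} {p : Fin N → ℂ} {ε : ℝ} {s : Set (Fin N → ℂ)}
    (hs : IsOpen s) (hp : p ∈ s)
    (hu : ∀ y ∈ s, ContDiffAt ℝ 2 u y) (hv : ∀ y ∈ s, ContDiffAt ℝ 2 v y)
    (vv ww : Fin N → ℂ) :
    d2 N (fun z => u z - v z - ε * qfun N z) p vv ww
      = d2 N u p vv ww - d2 N v p vv ww - ε * Mq ww vv := by
  have hMq_symm : ∀ y : Fin N → ℂ, Mq y ww = Mq ww y := by
    intro y
    rw [Mq_apply, Mq_apply]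
    apply Finset.sum_congr rfl
    intro k _
    ring
  have hev : (fun y => fderiv ℝ (fun z => u z - v z - ε * qfun N z) y ww)
      =ᶠ[nhds p] (fun y => fderiv ℝ u y ww - fderiv ℝ v y ww - ε * Mq ww y) := by
    filter_upwards [hs.mem_nhds hp] with y hy
    have hud : DifferentiableAt ℝ u y := (hu y hy).differentiableAt (by norm_num)
    have hvd : DifferentiableAt ℝ v y := (hv y hy).differentiableAt (by norm_num)
    have h1 : HasFDerivAt (fun z => u z - v z - ε * qfun N z)
        ((fderiv ℝ u y - fderiv ℝ v y) - ε • Mq y) y :=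
      (hud.hasFDerivAt.sub hvd.hasFDerivAt).sub ((qfun_hasFDerivAt y).const_mul ε)
    rw [h1.fderiv]
    simp only [ContinuousLinearMap.coe_sub', Pi.sub_apply, ContinuousLinearMap.coe_smul',
      Pi.smul_apply, smul_eq_mul]
    rw [hMq_symm y]
  show fderiv ℝ (fun y => fderiv ℝ (fun z => u z - v z - ε * qfun N z) y ww) p vv = _
  rw [hev.fderiv_eq]
  have hA : HasFDerivAt (fun y => fderiv ℝ u y ww)
      ((ContinuousLinearMap.apply ℝ ℝ ww).comp (fderiv ℝ (fderiv ℝ u) p)) p :=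
    (ContinuousLinearMap.apply ℝ ℝ ww).hasFDerivAt.comp p
      (((hu p hp).fderiv_right (m := 1) (by norm_num)).differentiableAt (by norm_num)).hasFDerivAt
  have hB : HasFDerivAt (fun y => fderiv ℝ v y ww)
      ((ContinuousLinearMap.apply ℝ ℝ ww).comp (fderiv ℝ (fderiv ℝ v) p)) p :=
    (ContinuousLinearMap.apply ℝ ℝ ww).hasFDerivAt.comp p
      (((hv p hp).fderiv_right (m := 1) (by norm_num)).differentiableAt (by norm_num)).hasFDerivAt
  have hC : HasFDerivAt (fun y => ε * Mq ww y) (ε • Mq ww) p :=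
    (Mq ww).hasFDerivAt.const_mul ε
  have hsum : HasFDerivAt (fun y => fderiv ℝ u y ww - fderiv ℝ v y ww - ε * Mq ww y) _ p :=
    (hA.sub hB).sub hC
  rw [hsum.fderiv]
  simp only [ContinuousLinearMap.coe_sub', Pi.sub_apply, ContinuousLinearMap.coe_smul',
    Pi.smul_apply, smul_eq_mul, ContinuousLinearMap.coe_comp', Function.comp_apply,
    ContinuousLinearMap.apply_apply]
  rw [d2_eq_fderiv2 (hu p hp) vv ww, d2_eq_fderiv2 (hv p hp) vv ww]

lemma cHess_combo {u v : (Fin N → ℂ) → ℝ} {p : Fin N → ℂ} {ε : ℝ} {s : Set (Fin N → ℂ)}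
    (hs : IsOpen s) (hp : p ∈ s)
    (hu : ∀ y ∈ s, ContDiffAt ℝ 2 u y) (hv : ∀ y ∈ s, ContDiffAt ℝ 2 v y)
    (i j : Fin N) :
    cHess N (fun z => u z - v z - ε * qfun N z) p i j
      = cHess N u p i j - cHess N v p i j - (ε : ℂ) * (if i = j then 1 else 0) := by
  simp only [cHess, d2_combo hs hp hu hv, Mq_single, Complex.one_re, Complex.one_im,
    Complex.I_re, Complex.I_im]
  by_cases h : i = j
  · subst h
    simp only [if_pos rfl]
    push_cast
    ring
  · simp only [if_neg h]
    push_cast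
    ring

end Combo


/-- Comparison principle for `(n−1)`-plurisubharmonic functions: if `Ω ⊂ ℂⁿ` is a bounded
domain, `u, v` are continuous on `cl(Ω)` and smooth on `Ω` with `P(u) ≥ 0`, `P(v) ≥ 0`,
`P(v)ⁿ ≥ P(u)ⁿ` on `Ω` (i.e. `det P(v) ≥ det P(u)`), and `v ≤ u` on `∂Ω`,
then `v ≤ u` on `Ω`. -/
theorem stmt_9 (n : ℕ) (hn : 2 ≤ n) (Ω : Set (Fin n → ℂ))
    (hΩopen : IsOpen Ω) (hΩbdd : Bornology.IsBounded Ω)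
    (u v : (Fin n → ℂ) → ℝ)
    (hucont : ContinuousOn u (closure Ω)) (hvcont : ContinuousOn v (closure Ω))
    (husm : ContDiffOn ℝ (⊤ : ℕ∞) u Ω) (hvsm : ContDiffOn ℝ (⊤ : ℕ∞) v Ω)
    (hPu : ∀ z ∈ Ω, (Pmat n u z).PosSemidef)
    (hPv : ∀ z ∈ Ω, (Pmat n v z).PosSemidef)
    (hdet : ∀ z ∈ Ω, (Pmat n u z).det.re ≤ (Pmat n v z).det.re)
    (hbdry : ∀ z ∈ frontier Ω, v z ≤ u z) :
    ∀ z ∈ Ω, v z ≤ u z := by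
  intro z₀ hz₀
  by_contra hcon
  push_neg at hcon
  set δ := v z₀ - u z₀ with hδdef
  have hδ : 0 < δ := sub_pos.mpr hcon
  obtain ⟨R, hR⟩ := Bornology.IsBounded.exists_norm_le hΩbdd.closure
  set B := (n : ℝ) * R ^ 2 + 1 with hBdef
  have hB0 : 0 < B := by positivity
  have hq0 : ∀ y : Fin n → ℂ, 0 ≤ qfun n y :=
    fun y => Finset.sum_nonneg fun k _ => Complex.normSq_nonneg _
  have hqB : ∀ y ∈ closure Ω, qfun n y ≤ B := by
    intro y hy
    have h1 : ∀ k, Complex.normSq (y k) ≤ R ^ 2 := by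
      intro k
      have h2 : ‖y k‖ ≤ ‖y‖ := norm_le_pi_norm y k
      have h3 : ‖y‖ ≤ R := hR y hy
      have h4 : Complex.normSq (y k) = ‖y k‖ ^ 2 := by
        rw [Complex.sq_norm]
      nlinarith [norm_nonneg (y k)]
    calc qfun n y ≤ ∑ _k : Fin n, R ^ 2 := Finset.sum_le_sum fun k _ => h1 k
      _ = (n : ℝ) * R ^ 2 := by
          rw [Finset.sum_const, Finset.card_univ, Fintype.card_fin, nsmul_eq_mul]
      _ ≤ B := by linarith
  set ε := δ / (2 * B) with hεdef
  have hε : 0 < ε := by positivity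
  have hεB : ε * B = δ / 2 := by
    rw [hεdef]
    field_simp
  clear_value δ B ε
  set f := fun z => v z - u z + ε * qfun n z with hfdef
  have hfz₀ : δ ≤ f z₀ := by
    have h1 : 0 ≤ ε * qfun n z₀ := mul_nonneg hε.le (hq0 z₀)
    simp only [hfdef, hδdef]
    linarith
  have hfcont : ContinuousOn f (closure Ω) :=
    (hvcont.sub hucont).add (continuous_const.mul qfun_contDiff.continuous).continuousOn
  have hK : IsCompact (closure Ω) := hΩbdd.isCompact_closure
  obtain ⟨p, hpcl, hpmax⟩ := hK.exists_isMaxOn ⟨z₀, subset_closure hz₀⟩ hfcont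
  have hfp : δ ≤ f p := le_trans hfz₀ (hpmax (subset_closure hz₀))
  have hfrontier : ∀ y ∈ frontier Ω, f y < δ := by
    intro y hy
    have h1 : v y ≤ u y := hbdry y hy
    have h2 : y ∈ closure Ω := frontier_subset_closure hy
    have h3 : qfun n y ≤ B := hqB y h2
    have h4 : ε * qfun n y ≤ ε * B := mul_le_mul_of_nonneg_left h3 hε.le
    simp only [hfdef]
    linarith
  have hpΩ : p ∈ Ω := by
    by_contra hpn
    have hfr : p ∈ frontier Ω := by
      rw [hΩopen.frontier_eq]
      exact ⟨hpcl, hpn⟩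
    exact absurd hfp (not_le.mpr (hfrontier p hfr))
  have hlmax : IsLocalMax f p := by
    filter_upwards [hΩopen.mem_nhds hpΩ] with y hy using hpmax (subset_closure hy)
  have hu2 : ∀ y ∈ Ω, ContDiffAt ℝ 2 u y := fun y hy =>
    (husm.contDiffAt (hΩopen.mem_nhds hy)).of_le (by exact_mod_cast ENat.natCast_le_of_coe_top_le_withTop le_rfl 2)
  have hv2 : ∀ y ∈ Ω, ContDiffAt ℝ 2 v y := fun y hy =>
    (hvsm.contDiffAt (hΩopen.mem_nhds hy)).of_le (by exact_mod_cast ENat.natCast_le_of_coe_top_le_withTop le_rfl 2)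
  have hq2 : ∀ y : Fin n → ℂ, ContDiffAt ℝ 2 (qfun n) y := fun y =>
    qfun_contDiff.contDiffAt.of_le (by exact_mod_cast ENat.natCast_le_of_coe_top_le_withTop le_rfl 2)
  have hf2 : ∀ y ∈ Ω, ContDiffAt ℝ 2 f y := fun y hy =>
    ((hv2 y hy).sub (hu2 y hy)).add (contDiffAt_const.mul (hq2 y))
  set g := fun z => u z - v z - ε * qfun n z with hgdef
  have hfg : f = fun z => -(g z) := by
    funext z
    simp only [hfdef, hgdef]
    ring
  have hg2 : ∀ y ∈ Ω, ContDiffAt ℝ 2 g y := fun y hy =>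
    ((hu2 y hy).sub (hv2 y hy)).sub (contDiffAt_const.mul (hq2 y))
  have hpos : ∀ w, 0 ≤ d2 n g p w w := by
    intro w
    have h1 : d2 n f p w w ≤ 0 := by
      apply d2_nonpos_of_localMax ?_ hlmax w
      filter_upwards [hΩopen.mem_nhds hpΩ] with y hy using hf2 y hy
    rw [hfg, d2_neg] at h1
    linarith
  have hHg : (Matrix.of (cHess n g p)).PosSemidef := cHess_posSemidef (hg2 p hpΩ) hpos
  have hTpsd : ((∑ k, cHess n g p k k) • (1 : Matrix (Fin n) (Fin n) ℂ)
      - Matrix.of (cHess n g p)).PosSemidef := psd_trace_smul_one_sub hHg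
  set T := (∑ k, cHess n g p k k) • (1 : Matrix (Fin n) (Fin n) ℂ)
      - Matrix.of (cHess n g p) with hTdef
  have hne : ((n : ℂ) - 1) ≠ 0 := by
    intro h
    have h1 : (n : ℂ) = ((1 : ℕ) : ℂ) := by
      push_cast
      linear_combination h
    have h2 : n = 1 := Nat.cast_injective h1
    omega
  have hcast : ((((n : ℝ) - 1)⁻¹ : ℝ) : ℂ) = ((n : ℂ) - 1)⁻¹ := by
    push_cast
    ring
  have hn1 : (0:ℝ) ≤ ((n : ℝ) - 1)⁻¹ := by
    have : (2:ℝ) ≤ n := by exact_mod_cast hn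
    have h1 : (0:ℝ) ≤ (n:ℝ) - 1 := by linarith
    positivity
  have hSpsd : ((((n : ℂ) - 1)⁻¹ : ℂ) • T).PosSemidef := by
    rw [← hcast]
    exact psd_smul_real hn1 hTpsd
  have hεI : (((ε : ℝ) : ℂ) • (1 : Matrix (Fin n) (Fin n) ℂ)).PosDef := by
    rw [Matrix.smul_one_eq_diagonal]
    rw [Matrix.posDef_diagonal_iff]
    intro i
    exact Complex.zero_lt_real.mpr hε
  have hCpd : ((((ε : ℝ) : ℂ) • (1 : Matrix (Fin n) (Fin n) ℂ))
      + ((n : ℂ) - 1)⁻¹ • T).PosDef := hεI.add_posSemidef hSpsd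
  have hce : ∀ i j, cHess n g p i j
      = cHess n u p i j - cHess n v p i j - (ε : ℂ) * (if i = j then 1 else 0) :=
    cHess_combo hΩopen hpΩ hu2 hv2
  have htr : (∑ k, cHess n g p k k)
      = (∑ k, cHess n u p k k) - (∑ k, cHess n v p k k) - (n : ℂ) * ε := by
    simp only [hce]
    rw [Finset.sum_sub_distrib, Finset.sum_sub_distrib]
    simp [Finset.sum_const, Finset.card_univ]
  have hPmatEq : Pmat n u p = Pmat n v p + ((((ε : ℝ) : ℂ) • (1 : Matrix (Fin n) (Fin n) ℂ))
      + ((n : ℂ) - 1)⁻¹ • T) := by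
    have hinv : ((n : ℂ) - 1)⁻¹ * ((n : ℂ) - 1) = 1 := inv_mul_cancel₀ hne
    ext i j
    simp only [Pmat, hTdef, Matrix.add_apply, Matrix.smul_apply, Matrix.sub_apply,
      Matrix.one_apply, Matrix.of_apply, smul_eq_mul, htr, hce i j]
    by_cases h : i = j
    · simp only [if_pos h]
      field_simp
      ring
    · simp only [if_neg h]
      ring
  have hlt : (Pmat n v p).det.re < (Pmat n u p).det.re := by
    rw [hPmatEq]
    exact det_re_lt_det_re (by omega : 0 < n) (hPv p hpΩ) hCpd
  exact absurd (hdet p hpΩ) (not_le.mpr hlt)
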